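/- Let R be a commutative ring, ω ∈ R, and let p, t : ℕ → R be sequences such that p(k) = t(k) + ω Σ_{j=1}^{k−1} p(k−j) t(j) for every 1 ≤ k ≤ n. Then t(n) = (−1)^{n−1} · det M, where M is the n × n matrix with entries M(i,1) = p(i) for 1 ≤ i ≤ n, M(i, i+1) = 1 for 1 ≤ i ≤ n−1, M(i,j) = ω · p(i−j+1) for 2 ≤ j ≤ i, and M(i,j) = 0 whenever j > i+1. -/

import Mathlib

open Finset

/-- Cramer-type determinant formula expressing `t(n)` through the `p(k)`.
The matrix `M` is indexed here by `Fin n` (0-based); the 1-based entry `M(i,j)` of the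
statement corresponds to `M ⟨i-1⟩ ⟨j-1⟩`. -/
theorem stmt_3 (R : Type*) [CommRing R] (ω : R) (p t : ℕ → R) (n : ℕ) (hn : 1 ≤ n)
    (hpt : ∀ k : ℕ, 1 ≤ k → k ≤ n →
      p k = t k + ω * ∑ j ∈ Icc 1 (k - 1), p (k - j) * t j)
    (M : Matrix (Fin n) (Fin n) R)
    (hM1 : ∀ i : Fin n, ∀ j : Fin n, (j : ℕ) = 0 → M i j = p ((i : ℕ) + 1))
    (hM2 : ∀ i : Fin n, ∀ j : Fin n, (j : ℕ) = (i : ℕ) + 1 → M i j = 1)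
    (hM3 : ∀ i : Fin n, ∀ j : Fin n, 1 ≤ (j : ℕ) → (j : ℕ) ≤ (i : ℕ) →
      M i j = ω * p ((i : ℕ) - (j : ℕ) + 1))
    (hM4 : ∀ i : Fin n, ∀ j : Fin n, (i : ℕ) + 1 < (j : ℕ) → M i j = 0) :
    t n = (-1 : R) ^ (n - 1) * M.det := by
  obtain ⟨m, rfl⟩ : ∃ m, n = m + 1 := ⟨n - 1, (Nat.succ_pred_eq_of_pos hn).symm⟩
  set A : Matrix (Fin (m+1)) (Fin (m+1)) R :=
    fun i j => if (i : ℕ) = (j : ℕ) then 1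
      else if (j : ℕ) < (i : ℕ) then ω * p ((i : ℕ) - (j : ℕ)) else 0 with hA
  set tv : Fin (m+1) → R := fun i => t ((i : ℕ) + 1) with htv
  set pv : Fin (m+1) → R := fun i => p ((i : ℕ) + 1) with hpv
  -- A is lower triangular with unit diagonal
  have hAdet : A.det = 1 := by
    rw [Matrix.det_of_lowerTriangular A]
    · simp [hA]
    · intro i j hij
      have : (i : ℕ) < (j : ℕ) := hij
      simp only [hA]
      rw [if_neg (by omega), if_neg (by omega)]
  -- the linear system
  have key : ∀ i : Fin (m+1), ∑ j : Fin (m+1), A i j * tv j = pv i := by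
    intro i
    have hi : (i : ℕ) < m + 1 := i.isLt
    have hrw := Fin.sum_univ_eq_sum_range
      (fun k : ℕ => (if (i : ℕ) = k then 1
        else if k < (i : ℕ) then ω * p ((i : ℕ) - k) else 0) * t (k + 1)) (m+1)
    calc ∑ j : Fin (m+1), A i j * tv j
        = ∑ k ∈ range (m+1), (if (i : ℕ) = k then 1
            else if k < (i : ℕ) then ω * p ((i : ℕ) - k) else 0) * t (k + 1) := hrw
      _ = ∑ k ∈ range ((i : ℕ)+1), (if (i : ℕ) = k then 1
            else if k < (i : ℕ) then ω * p ((i : ℕ) - k) else 0) * t (k + 1) := by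
          refine (Finset.sum_subset (by intro k hk; simp_all; omega) ?_).symm
          intro k hk hk'
          simp only [Finset.mem_range] at hk hk'
          rw [if_neg (by omega), if_neg (by omega), zero_mul]
      _ = (∑ k ∈ range (i : ℕ), ω * p ((i : ℕ) - k) * t (k + 1)) + t ((i : ℕ) + 1) := by
          rw [Finset.sum_range_succ, if_pos rfl, one_mul]
          congr 1
          refine Finset.sum_congr rfl fun k hk => ?_
          simp only [Finset.mem_range] at hk
          rw [if_neg (by omega), if_pos hk]
      _ = pv i := by
          show _ = p ((i : ℕ) + 1)
          rw [hpt ((i : ℕ) + 1) (by omega) (by omega)]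
          have : ∑ j ∈ Icc 1 ((i : ℕ) + 1 - 1), p ((i : ℕ) + 1 - j) * t j
              = ∑ k ∈ range (i : ℕ), p ((i : ℕ) - k) * t (k + 1) := by
            rw [show Icc 1 ((i : ℕ) + 1 - 1) = Ico 1 ((i : ℕ) + 1) by
                rw [Finset.Ico_add_one_right_eq_Icc, Nat.add_sub_cancel],
              Finset.sum_Ico_eq_sum_range]
            refine Finset.sum_congr (by rw [Nat.add_sub_cancel]) fun k hk => ?_
            simp only [Finset.mem_range] at hk
            congr 2 <;> omega
          rw [this, Finset.mul_sum, add_comm]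
          congr 1
          exact Finset.sum_congr rfl fun k _ => by ring
  -- Cramer's rule
  have hcram : ∀ i0 : Fin (m+1), A.cramer pv i0 = tv i0 := by
    intro i0
    have h1 : A.cramer pv i0 = ∑ j : Fin (m+1), A.cramer (fun i => A i j * tv j) i0 := by
      rw [Matrix.sum_cramer_apply,
        show pv = fun j => ∑ x : Fin (m+1), A j x * tv x from funext fun i => (key i).symm]
    rw [h1]
    have h2 : ∀ j : Fin (m+1), A.cramer (fun i => A i j * tv j) i0
        = tv j * (Pi.single j A.det : Fin (m+1) → R) i0 := by
      intro j
      have hsm : (fun i => A i j * tv j) = tv j • (fun i => A i j) := by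
        funext i; simp [smul_eq_mul, mul_comm]
      rw [hsm, map_smul, Pi.smul_apply, smul_eq_mul,
        Matrix.cramer_row_self A (fun i => A i j) j (fun _ => rfl)]
    simp only [h2, hAdet]
    rw [Finset.sum_eq_single i0]
    · simp
    · intro b _ hb
      rw [Pi.single_eq_of_ne' hb, mul_zero]
    · simp
  have hdetA' : (Matrix.updateCol A (Fin.last m) pv).det = t (m + 1) := by
    have := hcram (Fin.last m)
    rw [Matrix.cramer_apply] at this
    rw [this, htv]
    simp
  -- M is the updated matrix with permuted columns
  set σ : Equiv.Perm (Fin (m+1)) := (finRotate (m+1))⁻¹ with hσ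
  have hMs : M = (Matrix.updateCol A (Fin.last m) pv).submatrix id ⇑σ := by
    ext i j
    obtain ⟨k, rfl⟩ : ∃ k, finRotate (m+1) k = j := ⟨_, Equiv.apply_symm_apply _ j⟩
    rw [Matrix.submatrix_apply, id_eq, hσ, Equiv.Perm.inv_def, Equiv.symm_apply_apply]
    by_cases hk : k = Fin.last m
    · subst hk
      have hc : ((finRotate (m+1) (Fin.last m) : Fin (m+1)) : ℕ) = 0 := by
        rw [coe_finRotate, if_pos rfl]
      rw [hM1 i _ hc, Matrix.updateCol_self, hpv]
    · have hc : ((finRotate (m+1) k : Fin (m+1)) : ℕ) = (k : ℕ) + 1 :=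
        coe_finRotate_of_ne_last hk
      rw [Matrix.updateCol_ne hk]
      rcases lt_trichotomy (k : ℕ) (i : ℕ) with h | h | h
      · rw [hM3 i _ (by omega) (by omega)]
        simp only [hA]
        rw [if_neg (by omega), if_pos h]
        congr 2
        omega
      · rw [hM2 i _ (by omega)]
        simp only [hA]
        rw [if_pos h.symm]
      · rw [hM4 i _ (by omega)]
        simp only [hA]
        rw [if_neg (by omega), if_neg (by omega)]
  have hsign : (Equiv.Perm.sign σ : ℤ) = (-1 : ℤ) ^ m := by
    rw [hσ, map_inv, sign_finRotate]
    simp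
  rw [hMs, Matrix.det_permute' σ, hdetA']
  have : ((Equiv.Perm.sign σ : ℤ) : R) = (-1 : R) ^ m := by
    rw [hsign]; push_cast; ring
  rw [this]
  simp only [Nat.add_sub_cancel]
  rw [← mul_assoc, ← pow_add, ← two_mul, pow_mul]
  simp
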